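/- Let n ≥ 1, 1 ≤ k ≤ n+1, and c_{n,k} the choice over X_n = {0,…,n} with c_{n,k}(A) = A ∖ {0} if 0 ∈ A and |A| > k, else c_{n,k}(A) = A. Then the liberal number of c_{n,k} equals the binomial coefficient C(n, k−1): the family of ballots {v_A : A ⊆ X_n, 0 ∈ A, |A| = k}, with v_A(B) = B if B ⊆ A and v_A(B) = B ∖ {0} otherwise, is a liberal representation of size C(n,k−1), and no smaller liberal representation exists. -/
import Mathlib


/-- `r` rationalizes the quasi-choice `c`: `c A` is the set of `r`-maximal elements of `A`. -/
def Rationalizes {X : Type*} (r : X → X → Prop) (c : Set X → Set X) : Prop :=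
  ∀ A : Set X, c A = {a ∈ A | ∀ b ∈ A, ¬ r b a}

/-- `c` is freely rationalizable (a ballot): rationalized by an arbitrary binary relation. -/
def FreelyRat {X : Type*} (c : Set X → Set X) : Prop :=
  ∃ r : X → X → Prop, Rationalizes r c

/-- `c` is asymmetrically rationalizable. -/
def AsymRat {X : Type*} (c : Set X → Set X) : Prop :=
  ∃ r : X → X → Prop, (∀ a b, r a b → ¬ r b a) ∧ Rationalizes r c

/-- Contractiveness: `c` is a quasi-choice. -/
def IsQuasiChoice {X : Type*} (c : Set X → Set X) : Prop :=
  ∀ A : Set X, c A ⊆ A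

/-- Axiom α (Chernoff, Standard Contraction Consistency). -/
def AxiomAlpha {X : Type*} (c : Set X → Set X) : Prop :=
  ∀ ⦃A B : Set X⦄ ⦃x : X⦄, A ⊆ B → x ∈ A → x ∈ c B → x ∈ c A

/-- Axiom γ (Standard Expansion Consistency). -/
def AxiomGamma {X : Type*} (c : Set X → Set X) : Prop :=
  ∀ ⦃A B : Set X⦄ ⦃x : X⦄, x ∈ c A → x ∈ c B → x ∈ c (A ∪ B)

/-- A liberal representation of `c` by the family of ballots `v`. -/
def IsLiberalRep {X : Type*} (c : Set X → Set X) {k : ℕ} (v : Fin k → Set X → Set X) : Prop :=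
  (∀ i, FreelyRat (v i)) ∧
    ∀ A : Set X, ∀ x ∈ A, (x ∈ c A ↔ ∃ i, x ∈ v i A)

/-- A democratic representation of `c` by the family of ballots `v`:
an item is chosen iff more than half of the ballots endorse it. -/
def IsDemRep {X : Type*} (c : Set X → Set X) {k : ℕ} (v : Fin k → Set X → Set X) : Prop :=
  (∀ i, FreelyRat (v i)) ∧
    ∀ A : Set X, ∀ x ∈ A, (x ∈ c A ↔ 2 * Nat.card {i : Fin k // x ∈ v i A} > k)

/-- The liberal number of `c`: the minimum size of a liberal representation (⊤ if none). -/
noncomputable def lib {X : Type*} (c : Set X → Set X) : ℕ∞ :=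
  sInf {n : ℕ∞ | ∃ (k : ℕ) (v : Fin k → Set X → Set X), 0 < k ∧ IsLiberalRep c v ∧ n = (k : ℕ∞)}

/-- The democratic number of `c`: the minimum size of a democratic representation (⊤ if none). -/
noncomputable def dem {X : Type*} (c : Set X → Set X) : ℕ∞ :=
  sInf {n : ℕ∞ | ∃ (k : ℕ) (v : Fin k → Set X → Set X), 0 < k ∧ IsDemRep c v ∧ n = (k : ℕ∞)}

/-- `c` is `s`-majoritarian: some finite family of ballots selects exactly the items
endorsed by a share of ballots strictly larger than `s`. -/
def Majoritarian {X : Type*} (s : ℝ) (c : Set X → Set X) : Prop :=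
  ∃ (k : ℕ) (v : Fin k → Set X → Set X), 0 < k ∧ (∀ i, FreelyRat (v i)) ∧
    ∀ A : Set X, ∀ x ∈ A,
      (x ∈ c A ↔ (Nat.card {i : Fin k // x ∈ v i A} : ℝ) / (k : ℝ) > s)

open Classical in
/-- The choice `c_{n,k}` over `{0,…,n}`: it removes `0` from menus containing `0` of
size strictly larger than `k`, and is neutral otherwise. -/
noncomputable def cnk (n k : ℕ) : Set (Fin (n + 1)) → Set (Fin (n + 1)) := fun A =>
  if (0 : Fin (n + 1)) ∈ A ∧ k < A.ncard then A \ {0} else A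

-- auxiliary
open Classical in
noncomputable def myBallot {n : ℕ} (A : Finset (Fin (n+1))) :
    Set (Fin (n+1)) → Set (Fin (n+1)) :=
  fun B => if B ⊆ (A : Set (Fin (n+1))) then B else B \ {0}

lemma myBallot_rat {n : ℕ} (A : Finset (Fin (n+1))) : FreelyRat (myBallot A) := by
  refine ⟨fun b x => x = 0 ∧ b ∉ (A : Set (Fin (n+1))), fun B => ?_⟩
  unfold myBallot
  by_cases h : B ⊆ (A : Set (Fin (n+1)))
  · rw [if_pos h]
    ext x
    simp only [Set.mem_setOf_eq]
    exact ⟨fun hx => ⟨hx, fun b hb ⟨_, hbA⟩ => hbA (h hb)⟩, fun hx => hx.1⟩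
  · rw [if_neg h]
    obtain ⟨b0, hb0B, hb0A⟩ := Set.not_subset.1 h
    ext x
    simp only [Set.mem_diff, Set.mem_singleton_iff, Set.mem_setOf_eq]
    constructor
    · rintro ⟨hxB, hx0⟩
      exact ⟨hxB, fun b hb ⟨h0, _⟩ => hx0 h0⟩
    · rintro ⟨hxB, hx⟩
      refine ⟨hxB, fun h0 => hx b0 hb0B ⟨h0, hb0A⟩⟩

lemma myBallot_of_subset {n : ℕ} {A : Finset (Fin (n+1))} {B : Set (Fin (n+1))}
    (h : B ⊆ (A : Set (Fin (n+1)))) : myBallot A B = B := by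
  unfold myBallot; rw [if_pos h]

lemma myBallot_of_not_subset {n : ℕ} {A : Finset (Fin (n+1))} {B : Set (Fin (n+1))}
    (h : ¬ B ⊆ (A : Set (Fin (n+1)))) : myBallot A B = B \ {0} := by
  unfold myBallot; rw [if_neg h]

lemma freelyRat_gamma {X : Type*} {c : Set X → Set X} (h : FreelyRat c)
    {A B : Set X} {x : X} (hA : x ∈ c A) (hB : x ∈ c B) : x ∈ c (A ∪ B) := by
  obtain ⟨r, hr⟩ := h
  rw [hr] at hA hB ⊢
  obtain ⟨hxA, hAmax⟩ := hA
  obtain ⟨hxB, hBmax⟩ := hB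
  exact ⟨Or.inl hxA, fun b hb => hb.elim (hAmax b) (hBmax b)⟩

lemma card_zero_subsets (n k : ℕ) (hk1 : 1 ≤ k) :
    Fintype.card {A : Finset (Fin (n+1)) // (0 : Fin (n+1)) ∈ A ∧ A.card = k}
      = n.choose (k-1) := by
  rw [Fintype.card_subtype]
  have : (Finset.univ.filter fun A : Finset (Fin (n+1)) => (0 : Fin (n+1)) ∈ A ∧ A.card = k).card
      = (Finset.powersetCard (k-1) ((Finset.univ : Finset (Fin (n+1))).erase 0)).card := by
    refine Finset.card_bij' (fun A _ => A.erase 0) (fun S _ => insert 0 S) ?_ ?_ ?_ ?_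
    · intro A hA
      simp only [Finset.mem_filter] at hA
      rw [Finset.mem_powersetCard]
      refine ⟨fun x hx => ?_, ?_⟩
      · simp only [Finset.mem_erase] at hx ⊢
        exact ⟨hx.1, Finset.mem_univ _⟩
      · rw [Finset.card_erase_of_mem hA.2.1, hA.2.2]
    · intro S hS
      rw [Finset.mem_powersetCard] at hS
      simp only [Finset.mem_filter]
      have h0 : (0 : Fin (n+1)) ∉ S := fun h => by
        have := hS.1 h; simp at this
      refine ⟨Finset.mem_univ _, Finset.mem_insert_self _ _, ?_⟩
      rw [Finset.card_insert_of_notMem h0, hS.2]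
      omega
    · intro A hA
      simp only [Finset.mem_filter] at hA
      exact Finset.insert_erase hA.2.1
    · intro S hS
      rw [Finset.mem_powersetCard] at hS
      have h0 : (0 : Fin (n+1)) ∉ S := fun h => by
        have := hS.1 h; simp at this
      exact Finset.erase_insert h0
  rw [this, Finset.card_powersetCard, Finset.card_erase_of_mem (Finset.mem_univ _),
    Finset.card_univ, Fintype.card_fin]
  norm_num

theorem stmt17 (n k : ℕ) (hn : 1 ≤ n) (hk1 : 1 ≤ k) (hk2 : k ≤ n + 1) :
    lib (cnk n k) = ((n.choose (k - 1) : ℕ) : ℕ∞) := by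
  classical
  have hkn : k - 1 ≤ n := by omega
  have hm : 0 < n.choose (k-1) := Nat.choose_pos hkn
  set m := n.choose (k-1) with hmdef
  -- the index equivalence
  have hcard := card_zero_subsets n k hk1
  let e : Fin m ≃ {A : Finset (Fin (n+1)) // (0 : Fin (n+1)) ∈ A ∧ A.card = k} :=
    (Fintype.equivFinOfCardEq hcard).symm
  refine le_antisymm ?_ ?_
  · -- upper bound: exhibit representation
    apply sInf_le
    refine ⟨m, fun i => myBallot (e i).1, hm, ⟨fun i => myBallot_rat _, ?_⟩, rfl⟩
    intro B x hxB
    have hBfin : B.Finite := Set.toFinite B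
    by_cases hc : (0 : Fin (n+1)) ∈ B ∧ k < B.ncard
    · rw [cnk, if_pos hc]
      constructor
      · rintro ⟨hxB, hx0⟩
        refine ⟨⟨0, hm⟩, ?_⟩
        show x ∈ myBallot (e ⟨0, hm⟩).1 B
        by_cases hsub : B ⊆ ((e ⟨0, hm⟩).1 : Set (Fin (n+1)))
        · rw [myBallot_of_subset hsub]; exact hxB
        · rw [myBallot_of_not_subset hsub]; exact ⟨hxB, hx0⟩
      · rintro ⟨i, hi⟩
        replace hi : x ∈ myBallot (e i).1 B := hi
        by_cases hsub : B ⊆ ((e i).1 : Set (Fin (n+1)))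
        · exfalso
          have hle : B.ncard ≤ ((e i).1 : Set (Fin (n+1))).ncard :=
            Set.ncard_le_ncard hsub (Set.toFinite _)
          rw [Set.ncard_coe_finset, (e i).2.2] at hle
          omega
        · rw [myBallot_of_not_subset hsub] at hi; exact hi
    · rw [cnk, if_neg hc]
      refine ⟨fun _ => ?_, fun _ => hxB⟩
      by_cases hx0 : x = 0
      · -- then 0 ∈ B and ncard B ≤ k; extend toFinset to a k-set A ⊇ B
        subst hx0
        have hnc : B.ncard ≤ k := by
          by_contra h; exact hc ⟨hxB, by omega⟩
        have hcardB : hBfin.toFinset.card ≤ k := by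
          rwa [Set.ncard_eq_toFinset_card B hBfin] at hnc
        obtain ⟨A, hBA, hAcard⟩ := Finset.exists_superset_card_eq hcardB
          (by rw [Fintype.card_fin]; omega)
        have h0A : (0 : Fin (n+1)) ∈ A := hBA (hBfin.mem_toFinset.2 hxB)
        refine ⟨e.symm ⟨A, h0A, hAcard⟩, ?_⟩
        show (0 : Fin (n+1)) ∈ myBallot (e (e.symm ⟨A, h0A, hAcard⟩)).1 B
        have hsub : B ⊆ ((e (e.symm ⟨A, h0A, hAcard⟩)).1 : Set (Fin (n+1))) := by
          rw [Equiv.apply_symm_apply]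
          intro y hy
          exact hBA (hBfin.mem_toFinset.2 hy)
        rw [myBallot_of_subset hsub]; exact hxB
      · refine ⟨⟨0, hm⟩, ?_⟩
        show x ∈ myBallot (e ⟨0, hm⟩).1 B
        by_cases hsub : B ⊆ ((e ⟨0, hm⟩).1 : Set (Fin (n+1)))
        · rw [myBallot_of_subset hsub]; exact hxB
        · rw [myBallot_of_not_subset hsub]; exact ⟨hxB, hx0⟩
  · -- lower bound
    refine le_sInf ?_
    rintro x ⟨p, v, hp, ⟨hrat, hrep⟩, rfl⟩
    rw [Nat.cast_le]
    -- choose witness ballot for each k-set containing 0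
    have hwit : ∀ A : {A : Finset (Fin (n+1)) // (0 : Fin (n+1)) ∈ A ∧ A.card = k},
        ∃ i : Fin p, (0 : Fin (n+1)) ∈ v i (A.1 : Set (Fin (n+1))) := by
      intro A
      have h0 : (0 : Fin (n+1)) ∈ (A.1 : Set (Fin (n+1))) := A.2.1
      have := (hrep (A.1 : Set (Fin (n+1))) 0 h0).1
      apply this
      rw [cnk, if_neg]
      · exact h0
      · rintro ⟨-, hlt⟩
        rw [Set.ncard_coe_finset, A.2.2] at hlt
        omega
    choose f hf using hwit
    have hinj : Function.Injective f := by
      intro A B hAB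
      by_contra hne
      have hABne : A.1 ≠ B.1 := fun h => hne (Subtype.ext h)
      have hga := freelyRat_gamma (hrat (f A)) (hf A) (hAB ▸ hf B)
      have hU : ((A.1 : Set (Fin (n+1))) ∪ (B.1 : Set (Fin (n+1)))) = ((A.1 ∪ B.1 : Finset (Fin (n+1))) : Set (Fin (n+1))) := by
        simp
      have h0U : (0 : Fin (n+1)) ∈ (A.1 : Set (Fin (n+1))) ∪ (B.1 : Set (Fin (n+1))) := Or.inl A.2.1
      have hmem : (0 : Fin (n+1)) ∈ cnk n k ((A.1 : Set (Fin (n+1))) ∪ (B.1 : Set (Fin (n+1)))) :=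
        (hrep _ 0 h0U).2 ⟨f A, hga⟩
      have hlt : k < ((A.1 : Set (Fin (n+1))) ∪ (B.1 : Set (Fin (n+1)))).ncard := by
        rw [hU, Set.ncard_coe_finset]
        have hss : A.1 ⊂ A.1 ∪ B.1 := by
          refine ⟨Finset.subset_union_left, fun hsub => hABne ?_⟩
          have hBA : B.1 ⊆ A.1 := fun y hy => hsub (Finset.mem_union_right _ hy)
          exact (Finset.eq_of_subset_of_card_le hBA (by rw [A.2.2, B.2.2])).symm
        calc k = A.1.card := A.2.2.symm
          _ < (A.1 ∪ B.1).card := Finset.card_lt_card hss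
      rw [cnk, if_pos ⟨h0U, hlt⟩] at hmem
      exact hmem.2 rfl
    have := Fintype.card_le_of_injective f hinj
    rw [hcard] at this
    simpa using this
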